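/- Suppose (u,w) solves the system of obstacle problems in B_r ⊂ ℝᵈ (i.e., it is both a subsolution and supersolution pair). If u - ½w ≤ r²/(4d) on ∂B_r, then u(0) = ½w(0). Similarly, if u ≤ r²/(4d) on ∂B_r, then u(0) = 0. -/

import Mathlib

open MeasureTheory Metric Function Set
open scoped Convolution Topology RealInnerProductSpace

noncomputable def lap {d : ℕ} (f : EuclideanSpace ℝ (Fin d) → ℝ) (x : EuclideanSpace ℝ (Fin d)) : ℝ :=
  ∑ i : Fin d, fderiv ℝ (fun y => fderiv ℝ f y (EuclideanSpace.single i 1)) x (EuclideanSpace.single i 1)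

/-- `Δu ≥ f` on `Ω` in the distributional sense. -/
def DistribLapGEOn {d : ℕ} (u f : EuclideanSpace ℝ (Fin d) → ℝ)
    (Ω : Set (EuclideanSpace ℝ (Fin d))) : Prop :=
  ∀ φ : EuclideanSpace ℝ (Fin d) → ℝ, ContDiff ℝ (⊤ : ℕ∞) φ → HasCompactSupport φ →
    tsupport φ ⊆ Ω → (∀ x, 0 ≤ φ x) → ∫ x, f x * φ x ≤ ∫ x, u x * lap φ x

/-- `Δu ≤ f` on `Ω` in the distributional sense. -/
def DistribLapLEOn {d : ℕ} (u f : EuclideanSpace ℝ (Fin d) → ℝ)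
    (Ω : Set (EuclideanSpace ℝ (Fin d))) : Prop :=
  ∀ φ : EuclideanSpace ℝ (Fin d) → ℝ, ContDiff ℝ (⊤ : ℕ∞) φ → HasCompactSupport φ →
    tsupport φ ⊆ Ω → (∀ x, 0 ≤ φ x) → ∫ x, u x * lap φ x ≤ ∫ x, f x * φ x

/-- The pointwise constraints `u ≥ 0`, `w ≥ 0`, `u ≥ ½w`, `w ≥ ½u` on `Ω`. -/
def PairConstraint {d : ℕ} (u w : EuclideanSpace ℝ (Fin d) → ℝ)
    (Ω : Set (EuclideanSpace ℝ (Fin d))) : Prop :=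
  ∀ x ∈ Ω, 0 ≤ u x ∧ 0 ≤ w x ∧ w x / 2 ≤ u x ∧ u x / 2 ≤ w x

/-- Subsolution pair for the system of obstacle problems. -/
def SubPair {d : ℕ} (u w : EuclideanSpace ℝ (Fin d) → ℝ)
    (Ω : Set (EuclideanSpace ℝ (Fin d))) : Prop :=
  PairConstraint u w Ω ∧
  DistribLapGEOn u (fun x => if w x / 2 < u x then 1 else 0) Ω ∧
  DistribLapGEOn w (fun x => if u x / 2 < w x then 1 else 0) Ω

/-- Supersolution pair for the system of obstacle problems. -/
def SuperPair {d : ℕ} (u w : EuclideanSpace ℝ (Fin d) → ℝ)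
    (Ω : Set (EuclideanSpace ℝ (Fin d))) : Prop :=
  PairConstraint u w Ω ∧
  DistribLapLEOn u (fun _ => 1) Ω ∧ DistribLapLEOn w (fun _ => 1) Ω

/-- Solution pair: both a subsolution and a supersolution pair. -/
def SolPair {d : ℕ} (u w : EuclideanSpace ℝ (Fin d) → ℝ)
    (Ω : Set (EuclideanSpace ℝ (Fin d))) : Prop :=
  SubPair u w Ω ∧ SuperPair u w Ω

section Aux
variable {d : ℕ}
local notation "E" => EuclideanSpace ℝ (Fin d)

/-- directional derivative -/
noncomputable def dir (f : E → ℝ) (e : E) : E → ℝ := fun z => fderiv ℝ f z e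

lemma dir_contDiff {f : E → ℝ} (hf : ContDiff ℝ (⊤ : ℕ∞) f) (e : E) :
    ContDiff ℝ (⊤ : ℕ∞) (dir f e) :=
  (hf.fderiv_right (le_refl _)).clm_apply contDiff_const

lemma dir_hasCompactSupport {f : E → ℝ} (hf : HasCompactSupport f) (e : E) :
    HasCompactSupport (dir f e) :=
  (hf.fderiv ℝ).comp_left (g := fun L : E →L[ℝ] ℝ => L e) rfl

lemma lap_eq_zero_of_nmem_tsupport {f : E → ℝ} {y : E} (hy : y ∉ tsupport f) : lap f y = 0 := by
  have hopen : IsOpen (tsupport f)ᶜ := (isClosed_tsupport f).isOpen_compl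
  have hmem : (tsupport f)ᶜ ∈ 𝓝 y := hopen.mem_nhds hy
  rw [lap]
  refine Finset.sum_eq_zero fun i _ => ?_
  have h1 : ∀ z ∈ (tsupport f)ᶜ, (fun y => fderiv ℝ f y (EuclideanSpace.single i 1)) z = 0 := by
    intro z hz
    have : f =ᶠ[𝓝 z] 0 := by
      filter_upwards [hopen.mem_nhds hz] with a ha using image_eq_zero_of_notMem_tsupport ha
    show fderiv ℝ f z (EuclideanSpace.single i 1) = 0
    rw [this.fderiv_eq]; rw [show (0 : E → ℝ) = fun _ => (0:ℝ) from rfl, fderiv_fun_const]; rfl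
  have h2 : (fun y => fderiv ℝ f y (EuclideanSpace.single i 1)) =ᶠ[𝓝 y] 0 := by
    filter_upwards [hmem] with a ha using h1 a ha
  show fderiv ℝ (fun y => fderiv ℝ f y (EuclideanSpace.single i 1)) y (EuclideanSpace.single i 1) = 0
  rw [h2.fderiv_eq]; rw [show (0 : E → ℝ) = fun _ => (0:ℝ) from rfl, fderiv_fun_const]; rfl

lemma lap_continuous {f : E → ℝ} (hf : ContDiff ℝ (⊤:ℕ∞) f) : Continuous (lap f) := by
  have : lap f = fun x => ∑ i : Fin d,
      dir (dir f (EuclideanSpace.single i 1)) (EuclideanSpace.single i 1) x := rfl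
  rw [this]
  exact continuous_finset_sum _ fun i _ =>
    ((dir_contDiff (dir_contDiff hf _) _).continuous)

lemma lap_hasCompactSupport {f : E → ℝ} (hf : HasCompactSupport f) :
    HasCompactSupport (lap f) :=
  HasCompactSupport.intro hf fun x hx => lap_eq_zero_of_nmem_tsupport hx

lemma fderiv_conv {f g : E → ℝ} (hf : Integrable f) (hg : ContDiff ℝ (⊤:ℕ∞) g)
    (hcg : HasCompactSupport g) (x e : E) :
    fderiv ℝ (f ⋆[ContinuousLinearMap.lsmul ℝ ℝ, volume] g) x e
      = (f ⋆[ContinuousLinearMap.lsmul ℝ ℝ, volume] dir g e) x := by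
  have h := hcg.hasFDerivAt_convolution_right (ContinuousLinearMap.lsmul ℝ ℝ)
    hf.locallyIntegrable (hg.of_le (by exact_mod_cast le_top)) x
  rw [h.fderiv]
  exact convolution_precompR_apply _ hf.locallyIntegrable (hcg.fderiv ℝ)
    (hg.continuous_fderiv (by simp)) x e

lemma lap_conv {f g : E → ℝ} (hf : Integrable f) (hg : ContDiff ℝ (⊤:ℕ∞) g)
    (hcg : HasCompactSupport g) (x : E) :
    lap (f ⋆[ContinuousLinearMap.lsmul ℝ ℝ, volume] g) x = ∫ t, f t * lap g (x - t) := by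
  have key : ∀ i : Fin d,
      fderiv ℝ (fun y => fderiv ℝ (f ⋆[ContinuousLinearMap.lsmul ℝ ℝ, volume] g) y
          (EuclideanSpace.single i 1)) x (EuclideanSpace.single i 1)
        = (f ⋆[ContinuousLinearMap.lsmul ℝ ℝ, volume]
            dir (dir g (EuclideanSpace.single i 1)) (EuclideanSpace.single i 1)) x := by
    intro i
    have h1 : (fun y => fderiv ℝ (f ⋆[ContinuousLinearMap.lsmul ℝ ℝ, volume] g) y
        (EuclideanSpace.single i 1))
        = f ⋆[ContinuousLinearMap.lsmul ℝ ℝ, volume] dir g (EuclideanSpace.single i 1) :=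
      funext fun y => fderiv_conv hf hg hcg y _
    rw [h1]
    exact fderiv_conv hf (dir_contDiff hg _) (dir_hasCompactSupport hcg _) x _
  have hint : ∀ i : Fin d, Integrable (fun t => f t •
      (dir (dir g (EuclideanSpace.single i 1)) (EuclideanSpace.single i 1)) (x - t)) := by
    intro i
    exact (dir_hasCompactSupport (dir_hasCompactSupport hcg _) _).convolutionExists_right
      (ContinuousLinearMap.lsmul ℝ ℝ) hf.locallyIntegrable
      ((dir_contDiff (dir_contDiff hg _) _).continuous) x
  rw [lap]
  simp_rw [key, convolution_def, ContinuousLinearMap.lsmul_apply]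
  rw [← integral_finset_sum]
  · congr 1; funext t
    rw [lap, Finset.mul_sum]
    rfl
  · intro i _; exact hint i

lemma fderiv_comp_sub' {ρ : E → ℝ} (hρ : Differentiable ℝ ρ) (x z e : E) :
    fderiv ℝ (fun z' => ρ (x - z')) z e = - fderiv ℝ ρ (x - z) e := by
  have h : HasFDerivAt (fun z' => ρ (x - z'))
      ((fderiv ℝ ρ (x - z)).comp (-(ContinuousLinearMap.id ℝ (EuclideanSpace ℝ (Fin d))))) z :=
    (hρ (x - z)).hasFDerivAt.comp z ((hasFDerivAt_id z).const_sub x)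
  rw [h.fderiv]; simp

lemma lap_comp_sub {ρ : E → ℝ} (hρ : ContDiff ℝ (⊤ : ℕ∞) ρ) (x y : E) :
    lap (fun z => ρ (x - z)) y = lap ρ (x - y) := by
  rw [lap, lap]
  refine Finset.sum_congr rfl fun i _ => ?_
  set e := EuclideanSpace.single i (1:ℝ)
  have h1 : (fun z => fderiv ℝ (fun z' => ρ (x - z')) z e) = fun z => - dir ρ e (x - z) :=
    funext fun z => fderiv_comp_sub' (hρ.differentiable (by simp)) x z e
  rw [h1]
  have hd : Differentiable ℝ (dir ρ e) :=
    (dir_contDiff hρ e).differentiable (by simp)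
  have h2 : HasFDerivAt (fun z => - dir ρ e (x - z))
      (-((fderiv ℝ (dir ρ e) (x - y)).comp
        (-(ContinuousLinearMap.id ℝ (EuclideanSpace ℝ (Fin d)))))) y :=
    ((hd (x - y)).hasFDerivAt.comp y ((hasFDerivAt_id y).const_sub x)).neg
  rw [h2.fderiv]
  simp only [ContinuousLinearMap.neg_apply, ContinuousLinearMap.coe_comp', comp_apply,
    ContinuousLinearMap.coe_id', id_eq, map_neg, neg_neg]
  rfl

end Aux

section Aux2
variable {d : ℕ}
local notation "E" => EuclideanSpace ℝ (Fin d)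

lemma phi_tsupport (ρ : ContDiffBump (0 : E)) (x : E) :
    tsupport (fun y => ρ.normed volume (x - y)) = closedBall x ρ.rOut := by
  have hsupp : support (fun y => ρ.normed volume (x - y)) = ball x ρ.rOut := by
    ext y
    simp only [mem_support, ne_eq, ← mem_support (f := ρ.normed volume), ρ.support_normed_eq]
    simp [mem_ball, dist_eq_norm, sub_zero]
    constructor
    · intro h; rw [← norm_sub_rev]; exact h
    · intro h; rw [norm_sub_rev]; exact h
  rw [tsupport, hsupp, closure_ball x ρ.rOut_pos.ne']

lemma phi_contDiff (ρ : ContDiffBump (0 : E)) (x : E) :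
    ContDiff ℝ (⊤ : ℕ∞) (fun y => ρ.normed volume (x - y)) :=
  ρ.contDiff_normed.comp (contDiff_const.sub contDiff_id)

lemma phi_hasCompactSupport (ρ : ContDiffBump (0 : E)) (x : E) :
    HasCompactSupport (fun y => ρ.normed volume (x - y)) := by
  rw [HasCompactSupport, phi_tsupport]; exact isCompact_closedBall _ _

lemma phi_integral (ρ : ContDiffBump (0 : E)) (x : E) :
    ∫ y, ρ.normed volume (x - y) = 1 := by
  rw [integral_sub_left_eq_self (ρ.normed volume) volume x]
  exact ρ.integral_normed

lemma phi_nonneg (ρ : ContDiffBump (0 : E)) (x y : E) : 0 ≤ ρ.normed volume (x - y) :=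
  ρ.nonneg_normed _

lemma phi_integrable (ρ : ContDiffBump (0 : E)) (x : E) :
    Integrable (fun y => ρ.normed volume (x - y)) :=
  (ρ.integrable_normed).comp_sub_left x

/-- upper bound for mollified value -/
lemma mol_le {f : E → ℝ} (hf : Integrable f) (ρ : ContDiffBump (0 : E)) {x : E} {M : ℝ}
    (h : ∀ y ∈ closedBall x ρ.rOut, f y ≤ M) :
    (f ⋆[ContinuousLinearMap.lsmul ℝ ℝ, volume] ρ.normed volume) x ≤ M := by
  have hconv : Integrable (fun t => f t * ρ.normed volume (x - t)) := by
    have := (ρ.hasCompactSupport_normed (μ := volume)).convolutionExists_right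
      (ContinuousLinearMap.lsmul ℝ ℝ) hf.locallyIntegrable ρ.continuous_normed x
    simpa [ConvolutionExistsAt, smul_eq_mul] using this
  have hpt : ∀ t, f t * ρ.normed volume (x - t) ≤ M * ρ.normed volume (x - t) := by
    intro t
    rcases le_or_gt (dist t x) ρ.rOut with hle | hlt
    · exact mul_le_mul_of_nonneg_right (h t (mem_closedBall.2 hle)) (ρ.nonneg_normed _)
    · have : ρ.normed volume (x - t) = 0 := by
        have : (x - t) ∉ support (ρ.normed volume) := by
          rw [ρ.support_normed_eq]
          simp only [mem_ball, dist_eq_norm, sub_zero, not_lt]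
          rw [norm_sub_rev]
          calc ρ.rOut ≤ dist t x := hlt.le
            _ = ‖t - x‖ := by rw [dist_eq_norm]
        exact notMem_support.mp this
      simp [this]
  calc (f ⋆[ContinuousLinearMap.lsmul ℝ ℝ, volume] ρ.normed volume) x
      = ∫ t, f t * ρ.normed volume (x - t) := by
        simp [convolution_def, smul_eq_mul]
    _ ≤ ∫ t, M * ρ.normed volume (x - t) := by
        refine integral_mono hconv ((phi_integrable ρ x).const_mul M) hpt
    _ = M := by rw [integral_const_mul, phi_integral]; ring

lemma mol_ge {f : E → ℝ} (hf : Integrable f) (ρ : ContDiffBump (0 : E)) {x : E} {m : ℝ}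
    (h : ∀ y ∈ closedBall x ρ.rOut, m ≤ f y) :
    m ≤ (f ⋆[ContinuousLinearMap.lsmul ℝ ℝ, volume] ρ.normed volume) x := by
  have hconv : Integrable (fun t => f t * ρ.normed volume (x - t)) := by
    have := (ρ.hasCompactSupport_normed (μ := volume)).convolutionExists_right
      (ContinuousLinearMap.lsmul ℝ ℝ) hf.locallyIntegrable ρ.continuous_normed x
    simpa [ConvolutionExistsAt, smul_eq_mul] using this
  have hpt : ∀ t, m * ρ.normed volume (x - t) ≤ f t * ρ.normed volume (x - t) := by
    intro t
    rcases le_or_gt (dist t x) ρ.rOut with hle | hlt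
    · exact mul_le_mul_of_nonneg_right (h t (mem_closedBall.2 hle)) (ρ.nonneg_normed _)
    · have : ρ.normed volume (x - t) = 0 := by
        have : (x - t) ∉ support (ρ.normed volume) := by
          rw [ρ.support_normed_eq]
          simp only [mem_ball, dist_eq_norm, sub_zero, not_lt]
          rw [norm_sub_rev]
          calc ρ.rOut ≤ dist t x := hlt.le
            _ = ‖t - x‖ := by rw [dist_eq_norm]
        exact notMem_support.mp this
      simp [this]
  calc m = ∫ t, m * ρ.normed volume (x - t) := by rw [integral_const_mul, phi_integral]; ring
    _ ≤ ∫ t, f t * ρ.normed volume (x - t) :=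
        integral_mono ((phi_integrable ρ x).const_mul m) hconv hpt
    _ = (f ⋆[ContinuousLinearMap.lsmul ℝ ℝ, volume] ρ.normed volume) x := by
        simp [convolution_def, smul_eq_mul]


lemma quad_fderiv (α : ℝ) (z e : E) :
    fderiv ℝ (fun z : EuclideanSpace ℝ (Fin d) => α * ⟪z, z⟫) z e = 2 * α * ⟪z, e⟫ := by
  have h : HasFDerivAt (fun z : EuclideanSpace ℝ (Fin d) => α * ⟪z, z⟫)
      (α • (fderivInnerCLM ℝ (z, z)).comp
        ((ContinuousLinearMap.id ℝ (EuclideanSpace ℝ (Fin d))).prod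
          (ContinuousLinearMap.id ℝ (EuclideanSpace ℝ (Fin d))))) z :=
    (((hasFDerivAt_id z).inner ℝ (hasFDerivAt_id z))).const_mul α
  rw [h.fderiv]
  rw [ContinuousLinearMap.smul_apply, ContinuousLinearMap.comp_apply]
  rw [show ((ContinuousLinearMap.id ℝ (EuclideanSpace ℝ (Fin d))).prod
      (ContinuousLinearMap.id ℝ (EuclideanSpace ℝ (Fin d)))) e = (e, e) from rfl]
  rw [fderivInnerCLM_apply]
  simp only [smul_eq_mul]
  rw [real_inner_comm e z]
  ring

lemma quad_dirderiv (α : ℝ) (x : E) (e : E) :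
    fderiv ℝ (fun y : EuclideanSpace ℝ (Fin d) => 2 * α * ⟪y, e⟫) x e = 2 * α * ⟪e, e⟫ := by
  have hdi : DifferentiableAt ℝ (fun y : EuclideanSpace ℝ (Fin d) => ⟪y, e⟫) x :=
    differentiableAt_id.inner ℝ (differentiableAt_const e)
  rw [fderiv_const_mul hdi, ContinuousLinearMap.smul_apply, smul_eq_mul,
    fderiv_inner_apply ℝ differentiableAt_fun_id (differentiableAt_const e)]
  simp

lemma lap_quad (α : ℝ) (x : E) :
    lap (fun z : EuclideanSpace ℝ (Fin d) => α * ⟪z, z⟫) x = 2 * d * α := by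
  rw [lap]
  have key : ∀ i : Fin d,
      fderiv ℝ (fun y => fderiv ℝ (fun z : EuclideanSpace ℝ (Fin d) => α * ⟪z, z⟫) y
        (EuclideanSpace.single i 1)) x (EuclideanSpace.single i 1) = 2 * α := by
    intro i
    set e : EuclideanSpace ℝ (Fin d) := EuclideanSpace.single i 1 with he
    have h1 : (fun y => fderiv ℝ (fun z : EuclideanSpace ℝ (Fin d) => α * ⟪z, z⟫) y e)
        = fun y : EuclideanSpace ℝ (Fin d) => 2 * α * ⟪y, e⟫ := funext fun y => quad_fderiv α y e
    rw [h1, quad_dirderiv]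
    have : ⟪e, e⟫ = (1:ℝ) := by
      rw [he]
      rw [EuclideanSpace.inner_single_left]
      simp [EuclideanSpace.single_apply]
    rw [this]; ring
  simp only [key]
  rw [Finset.sum_const, Finset.card_univ, Fintype.card_fin, nsmul_eq_mul]
  ring

lemma quad_contDiff (α : ℝ) :
    ContDiff ℝ (⊤:ℕ∞) (fun z : EuclideanSpace ℝ (Fin d) => α * ⟪z, z⟫) :=
  contDiff_const.mul (contDiff_id.inner ℝ contDiff_id)


lemma lap_sub {f g : E → ℝ} (hf : ContDiff ℝ (⊤:ℕ∞) f) (hg : ContDiff ℝ (⊤:ℕ∞) g) (x : E) :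
    lap (fun z => f z - g z) x = lap f x - lap g x := by
  have hdf := hf.differentiable (by simp)
  have hdg := hg.differentiable (by simp)
  rw [lap, lap, lap, ← Finset.sum_sub_distrib]
  refine Finset.sum_congr rfl fun i _ => ?_
  set e : EuclideanSpace ℝ (Fin d) := EuclideanSpace.single i 1
  have h1 : (fun y => fderiv ℝ (fun z => f z - g z) y e)
      = fun y => fderiv ℝ f y e - fderiv ℝ g y e := by
    funext y
    rw [fderiv_fun_sub (hdf y) (hdg y)]
    simp
  rw [h1]
  have hdirf : DifferentiableAt ℝ (fun y => fderiv ℝ f y e) x :=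
    (dir_contDiff hf e).differentiable (by simp) x
  have hdirg : DifferentiableAt ℝ (fun y => fderiv ℝ g y e) x :=
    (dir_contDiff hg e).differentiable (by simp) x
  rw [fderiv_fun_sub hdirf hdirg]
  simp


lemma oneD_no_max {f f' : ℝ → ℝ} {L : ℝ} (hf : ∀ t, HasDerivAt f (f' t) t)
    (hf' : HasDerivAt f' L 0) (hL : 0 < L) (hmax : IsLocalMax f 0) : False := by
  have h0 : f' 0 = 0 := by
    have := hmax.deriv_eq_zero
    rwa [(hf 0).deriv] at this
  -- slope of f' tends to L
  have hslope : Filter.Tendsto (slope f' 0) (𝓝[≠] 0) (𝓝 L) :=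
    hasDerivAt_iff_tendsto_slope.mp hf'
  have hev : ∀ᶠ t in 𝓝[>] (0:ℝ), 0 < slope f' 0 t := by
    have : ∀ᶠ t in 𝓝[≠] (0:ℝ), 0 < slope f' 0 t := hslope.eventually (eventually_gt_nhds hL)
    exact this.filter_mono (nhdsWithin_mono 0 fun t ht => ne_of_gt ht)
  have hpos : ∀ᶠ t in 𝓝[>] (0:ℝ), 0 < f' t := by
    filter_upwards [hev, self_mem_nhdsWithin] with t ht ht'
    have ht' : (0:ℝ) < t := ht'
    have : slope f' 0 t = f' t / t := by
      rw [slope_def_field]; rw [h0]; ring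
    rw [this] at ht
    have := mul_pos ht ht'
    rwa [div_mul_cancel₀] at this
    exact ne_of_gt ht'
  rw [eventually_nhdsWithin_iff] at hpos
  rcases Metric.eventually_nhds_iff.mp hpos with ⟨b, hb, hball⟩
  rcases Metric.eventually_nhds_iff.mp hmax with ⟨a, ha, haball⟩
  set c := min (b/2) (a/2) with hc
  have hcpos : 0 < c := lt_min (by linarith) (by linarith)
  have hmono : StrictMonoOn f (Icc 0 c) := by
    refine strictMonoOn_of_deriv_pos (convex_Icc 0 c) ?_ ?_
    · intro t _; exact (hf t).continuousAt.continuousWithinAt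
    · intro t ht
      rw [interior_Icc] at ht
      rw [(hf t).deriv]
      refine hball ?_ ht.1
      have : |t| < b := by
        rw [abs_of_pos ht.1]
        calc t < c := ht.2
          _ ≤ b/2 := min_le_left _ _
          _ < b := by linarith
      simpa [Real.dist_eq] using this
  have h1 : f 0 < f c := hmono (left_mem_Icc.2 hcpos.le) (right_mem_Icc.2 hcpos.le) hcpos
  have h2 : f c ≤ f 0 := by
    refine haball ?_
    have : |c| < a := by
      rw [abs_of_pos hcpos]
      calc c ≤ a/2 := min_le_right _ _
        _ < a := by linarith
    simpa [Real.dist_eq] using this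
  linarith




lemma not_isLocalMax_of_lap_pos {g : E → ℝ} (hg : ContDiff ℝ (⊤:ℕ∞) g) {x₀ : E}
    (hlap : 0 < lap g x₀) (hmax : IsLocalMax g x₀) : False := by
  have hgdiff := hg.differentiable (by simp)
  obtain ⟨i, hi⟩ : ∃ i : Fin d, 0 < fderiv ℝ
      (fun y => fderiv ℝ g y (EuclideanSpace.single i 1)) x₀ (EuclideanSpace.single i 1) := by
    by_contra hcon
    push_neg at hcon
    have : lap g x₀ ≤ 0 := Finset.sum_nonpos fun i _ => hcon i
    linarith
  set e : EuclideanSpace ℝ (Fin d) := EuclideanSpace.single i 1 with he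
  set c : ℝ → EuclideanSpace ℝ (Fin d) := fun t => x₀ + t • e with hcdef
  have hc : ∀ t, HasDerivAt c e t := by
    intro t
    have := ((hasDerivAt_id t).smul_const e).const_add x₀
    rw [one_smul] at this
    exact this
  have hc0 : c 0 = x₀ := by simp [hcdef]
  set f : ℝ → ℝ := fun t => g (c t) with hfdef
  set f' : ℝ → ℝ := fun t => fderiv ℝ g (c t) e with hf'def
  have hf : ∀ t, HasDerivAt f (f' t) t := fun t =>
    (hgdiff (c t)).hasFDerivAt.comp_hasDerivAt t (hc t)
  have hdirdiff : Differentiable ℝ (fun z => fderiv ℝ g z e) :=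
    (dir_contDiff hg e).differentiable (by simp)
  have hf' : HasDerivAt f' (fderiv ℝ (fun z => fderiv ℝ g z e) x₀ e) 0 := by
    have := (hdirdiff (c 0)).hasFDerivAt.comp_hasDerivAt 0 (hc 0)
    rwa [hc0] at this
  have hlmax : IsLocalMax f 0 := by
    have htend : Filter.Tendsto c (𝓝 0) (𝓝 x₀) := by
      have := (hc 0).continuousAt
      rwa [ContinuousAt, hc0] at this
    have : ∀ᶠ t in 𝓝 (0:ℝ), g (c t) ≤ g x₀ := htend.eventually hmax
    have hf0 : f 0 = g x₀ := by rw [hfdef]; simp [hc0]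
    rw [IsLocalMax, IsMaxFilter, hf0]
    exact this
  exact oneD_no_max hf hf' hi hlmax

end Aux2
section Aux3
variable {d : ℕ}
local notation "E" => EuclideanSpace ℝ (Fin d)

lemma unif_cont {r κ : ℝ} {f : E → ℝ} (hf : ContinuousOn f (closedBall 0 r)) (hκ : 0 < κ) :
    ∃ η > 0, ∀ x ∈ closedBall (0:E) r, ∀ y ∈ closedBall (0:E) r,
      dist x y < η → dist (f x) (f y) < κ := by
  have := (isCompact_closedBall (0:E) r).uniformContinuousOn_of_continuous hf
  rw [Metric.uniformContinuousOn_iff] at this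
  obtain ⟨η, hη, h⟩ := this κ hκ
  exact ⟨η, hη, fun x hx y hy hd => h x hx y hy hd⟩

lemma annulus_bound {r η κ B ε : ℝ} {f : E → ℝ} (hr : 0 < r)
    (hB : ∀ x ∈ sphere (0:E) r, f x ≤ B)
    (hη : ∀ x ∈ closedBall (0:E) r, ∀ y ∈ closedBall (0:E) r,
      dist x y < η → dist (f x) (f y) < κ)
    {z : E} (hz1 : z ∈ closedBall (0:E) r) (hz2 : r - 3*ε ≤ ‖z‖)
    (h3η : 3*ε < η) (h3r : 3*ε < r) (hε : 0 < ε) :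
    f z ≤ B + κ := by
  have hznorm : (0:ℝ) < ‖z‖ := lt_of_lt_of_le (by linarith) hz2
  set p : EuclideanSpace ℝ (Fin d) := (r / ‖z‖) • z with hp
  have hpnorm : ‖p‖ = r := by
    rw [hp, norm_smul, Real.norm_eq_abs, abs_of_pos (div_pos hr hznorm)]
    field_simp
  have hps : p ∈ sphere (0:E) r := by
    rw [mem_sphere, dist_zero_right, hpnorm]
  have hpc : p ∈ closedBall (0:E) r := by
    rw [mem_closedBall, dist_zero_right, hpnorm]
  have hzr : ‖z‖ ≤ r := by rwa [mem_closedBall, dist_zero_right] at hz1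
  have hdist : dist z p < η := by
    rw [dist_eq_norm, hp]
    have h1 : z - (r/‖z‖) • z = (1 - r/‖z‖) • z := by rw [sub_smul, one_smul]
    rw [h1, norm_smul, Real.norm_eq_abs]
    have hkey : r / ‖z‖ * ‖z‖ = r := div_mul_cancel₀ r hznorm.ne'
    have h2 : |1 - r/‖z‖| = r/‖z‖ - 1 := by
      rw [abs_of_nonpos]
      · ring
      · have : (1:ℝ) ≤ r / ‖z‖ := (one_le_div hznorm).2 hzr
        linarith
    rw [h2, sub_mul, one_mul, hkey]
    linarith
  have := hη z hz1 p hpc hdist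
  rw [Real.dist_eq] at this
  have h3 : f z - f p ≤ |f z - f p| := le_abs_self _
  have h4 : f p ≤ B := hB p hps
  linarith

lemma nonneg_closure {r : ℝ} (hr : 0 < r) {f : E → ℝ} (hf : ContinuousOn f (closedBall 0 r))
    (h : ∀ x ∈ ball (0:E) r, 0 ≤ f x) : ∀ x ∈ closedBall (0:E) r, 0 ≤ f x := by
  intro x hx
  have hx' : x ∈ closure (ball (0:E) r) := by rwa [closure_ball 0 hr.ne']
  haveI : (𝓝[ball (0:E) r] x).NeBot := mem_closure_iff_nhdsWithin_neBot.mp hx'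
  have hc : Filter.Tendsto f (𝓝[ball (0:E) r] x) (𝓝 (f x)) :=
    (hf x hx).mono ball_subset_closedBall
  exact ge_of_tendsto hc (by filter_upwards [self_mem_nhdsWithin] with y hy using h y hy)

lemma le_closure {r : ℝ} (hr : 0 < r) {f g : E → ℝ} (hf : ContinuousOn f (closedBall 0 r))
    (hg : ContinuousOn g (closedBall 0 r))
    (h : ∀ x ∈ ball (0:E) r, f x ≤ g x) : ∀ x ∈ closedBall (0:E) r, f x ≤ g x := by
  intro x hx
  have := nonneg_closure hr (hg.sub hf) (fun y hy => sub_nonneg.2 (h y hy)) x hx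
  exact sub_nonneg.1 this

lemma integrable_mul_lap {r : ℝ} {g φ : E → ℝ} (hg : ContinuousOn g (closedBall 0 r))
    (hφ : ContDiff ℝ (⊤:ℕ∞) φ) (hcs : HasCompactSupport φ) (hsup : tsupport φ ⊆ ball 0 r) :
    Integrable (fun y => g y * lap φ y) := by
  have hind : Integrable (Set.indicator (closedBall (0:E) r) g) :=
    (hg.integrableOn_compact (isCompact_closedBall _ _)).integrable_indicator
      measurableSet_closedBall
  have heq : (fun y => g y * lap φ y)
      = fun y => lap φ y * Set.indicator (closedBall (0:E) r) g y := by
    funext y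
    by_cases hy : y ∈ closedBall (0:E) r
    · rw [Set.indicator_of_mem hy, mul_comm]
    · rw [Set.indicator_of_notMem hy, mul_zero,
        lap_eq_zero_of_nmem_tsupport (fun hmem => hy (ball_subset_closedBall (hsup hmem))),
        mul_zero]
  rw [heq]
  obtain ⟨C, hC⟩ := (lap_hasCompactSupport hcs).exists_bound_of_continuous (lap_continuous hφ)
  exact hind.bdd_mul (c := C) (lap_continuous hφ).aestronglyMeasurable (ae_of_all _ hC)

lemma one_le_lap_mol {r : ℝ} {g : E → ℝ} {P : E → Prop}
    (hpair : ∀ φ : E → ℝ, ContDiff ℝ (⊤:ℕ∞) φ → HasCompactSupport φ → tsupport φ ⊆ ball 0 r →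
      (∀ y ∈ tsupport φ, P y) → (∀ x, 0 ≤ φ x) → ∫ x, φ x ≤ ∫ x, g x * lap φ x)
    (ρ : ContDiffBump (0:E)) {x₀ : E} (hsub : closedBall x₀ ρ.rOut ⊆ ball 0 r)
    (hP : ∀ y ∈ closedBall x₀ ρ.rOut, P y)
    (hint : Integrable (Set.indicator (closedBall (0:E) r) g)) :
    1 ≤ lap ((Set.indicator (closedBall (0:E) r) g) ⋆[ContinuousLinearMap.lsmul ℝ ℝ, volume]
        ρ.normed volume) x₀ := by
  set φ : EuclideanSpace ℝ (Fin d) → ℝ := fun y => ρ.normed volume (x₀ - y) with hφdef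
  have hts : tsupport φ = closedBall x₀ ρ.rOut := phi_tsupport ρ x₀
  have h1 := lap_conv hint ρ.contDiff_normed (ρ.hasCompactSupport_normed (μ := volume)) x₀
  have h2 : (fun t => Set.indicator (closedBall (0:E) r) g t * lap (ρ.normed volume) (x₀ - t))
      = fun t => g t * lap φ t := by
    funext t
    have hl : lap φ t = lap (ρ.normed volume) (x₀ - t) := lap_comp_sub ρ.contDiff_normed x₀ t
    by_cases ht : t ∈ closedBall (0:E) r
    · rw [Set.indicator_of_mem ht, hl]
    · rw [Set.indicator_of_notMem ht]
      have hnm : t ∉ tsupport φ := fun hmem => ht (ball_subset_closedBall (hsub (hts ▸ hmem)))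
      rw [lap_eq_zero_of_nmem_tsupport hnm, mul_zero, zero_mul]
  calc (1:ℝ) = ∫ y, φ y := (phi_integral ρ x₀).symm
    _ ≤ ∫ y, g y * lap φ y := by
        refine hpair φ (phi_contDiff ρ x₀) (phi_hasCompactSupport ρ x₀)
          (by rw [hts]; exact hsub) (fun y hy => hP y (hts ▸ hy)) (fun y => phi_nonneg ρ x₀ y)
    _ = lap ((Set.indicator (closedBall (0:E) r) g)
          ⋆[ContinuousLinearMap.lsmul ℝ ℝ, volume] ρ.normed volume) x₀ := by
        rw [h1, h2]

end Aux3
section Core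
variable {d : ℕ}
local notation "E" => EuclideanSpace ℝ (Fin d)

lemma core (hd : 0 < d) {r : ℝ} (hr : 0 < r) {v : E → ℝ}
    (hcv : ContinuousOn v (closedBall 0 r))
    (hv0 : ∀ x ∈ closedBall (0:E) r, 0 ≤ v x)
    (hB : ∀ x ∈ sphere (0:E) r, v x ≤ r^2/(2*d))
    (hpair : ∀ φ : E → ℝ, ContDiff ℝ (⊤:ℕ∞) φ → HasCompactSupport φ → tsupport φ ⊆ ball 0 r →
      (∀ y ∈ tsupport φ, 0 < v y) → (∀ x, 0 ≤ φ x) → ∫ x, φ x ≤ ∫ x, v x * lap φ x) :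
    v 0 = 0 := by
  by_contra hne
  have h0mem : (0:E) ∈ closedBall (0:E) r := by
    rw [mem_closedBall, dist_self]; exact hr.le
  have hc : 0 < v 0 := lt_of_le_of_ne (hv0 0 h0mem) (Ne.symm hne)
  have hdR : (0:ℝ) < d := by exact_mod_cast hd
  have key : ∀ δ : ℝ, 0 < δ → δ < 1 → δ < r/8 →
      v 0 / 2 ≤ r^2/(2*d) + δ - ((1-δ)/(2*d)) * (r-2*δ)^2 := by
    intro δ hδ hδ1 hδr
    set c := v 0 with hcdef
    set κ := min δ (c/4) with hκdef
    have hκ : 0 < κ := lt_min hδ (by linarith)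
    have hκδ : κ ≤ δ := min_le_left _ _
    have hκc : κ ≤ c/4 := min_le_right _ _
    obtain ⟨η, hη, huc⟩ := unif_cont hcv hκ
    set ε := min (η/4) (min δ (r/8)) with hεdef
    have hε : 0 < ε := lt_min (by linarith) (lt_min hδ (by linarith))
    have hεη : 3*ε < η := by
      have : ε ≤ η/4 := min_le_left _ _
      linarith
    have hεδ : ε ≤ δ := (min_le_right _ _).trans (min_le_left _ _)
    have hεr : ε ≤ r/8 := (min_le_right _ _).trans (min_le_right _ _)
    set ρ : ContDiffBump (0:E) := ⟨ε/2, ε, by linarith, by linarith⟩ with hρdef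
    have hrout : ρ.rOut = ε := rfl
    set vt := Set.indicator (closedBall (0:E) r) v with hvt
    have hint : Integrable vt :=
      (hcv.integrableOn_compact (isCompact_closedBall _ _)).integrable_indicator
        measurableSet_closedBall
    set vm := vt ⋆[ContinuousLinearMap.lsmul ℝ ℝ, volume] ρ.normed volume with hvm
    have hvmsm : ContDiff ℝ (⊤:ℕ∞) vm :=
      (ρ.hasCompactSupport_normed (μ := volume)).contDiff_convolution_right _
        hint.locallyIntegrable ρ.contDiff_normed
    set α := (1-δ)/(2*(d:ℝ)) with hα
    have hα0 : 0 ≤ α := div_nonneg (by linarith) (by positivity)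
    set h : EuclideanSpace ℝ (Fin d) → ℝ := fun z => vm z - α * ⟪z,z⟫ with hh
    have hhsm : ContDiff ℝ (⊤:ℕ∞) h := hvmsm.sub (quad_contDiff α)
    have hKne : (0:E) ∈ closedBall (0:E) (r-ε) := by
      rw [mem_closedBall, dist_self]; linarith
    obtain ⟨x₀, hx₀K, hx₀max⟩ := (isCompact_closedBall (0:E) (r-ε)).exists_isMaxOn
      ⟨0, hKne⟩ (hhsm.continuous.continuousOn)
    have hx₀r : ‖x₀‖ ≤ r - ε := by rwa [mem_closedBall, dist_zero_right] at hx₀K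
    -- lower bound at 0
    have hvm0 : c - κ ≤ vm 0 := by
      refine mol_ge hint ρ ?_
      intro y hy
      rw [hrout] at hy
      have hymem : y ∈ closedBall (0:E) r :=
        closedBall_subset_closedBall (by linarith) hy
      rw [hvt, Set.indicator_of_mem hymem]
      rw [mem_closedBall] at hy
      have hd1 : dist y 0 < η := lt_of_le_of_lt hy (by linarith)
      have := huc y hymem 0 h0mem hd1
      rw [Real.dist_eq] at this
      have h2 := (abs_lt.1 this).1
      linarith
    have hh0 : c - κ ≤ h 0 := by
      show c - κ ≤ vm 0 - α * ⟪(0:EuclideanSpace ℝ (Fin d)), 0⟫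
      rw [inner_zero_left]
      simp only [mul_zero]
      linarith
    have hmain : c - κ ≤ h x₀ := le_trans hh0 (hx₀max hKne)
    have hhx₀ : h x₀ = vm x₀ - α * ⟪x₀, x₀⟫ := rfl
    rcases le_or_gt (r - 2*ε) ‖x₀‖ with hcaseA | hcaseB
    · -- Case A : annulus
      have hvmx₀ : vm x₀ ≤ r^2/(2*d) + κ := by
        refine mol_le hint ρ ?_
        intro y hy
        rw [hrout, mem_closedBall] at hy
        have hymem : y ∈ closedBall (0:E) r := by
          rw [mem_closedBall]
          calc dist y 0 ≤ dist y x₀ + dist x₀ 0 := dist_triangle _ _ _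
            _ ≤ ε + ‖x₀‖ := by rw [dist_zero_right]; linarith
            _ ≤ r := by linarith
        have hynorm : r - 3*ε ≤ ‖y‖ := by
          have h1 : dist x₀ 0 ≤ dist x₀ y + dist y 0 := dist_triangle _ _ _
          rw [dist_zero_right] at h1
          rw [dist_zero_right] at h1
          have h2 : dist x₀ y ≤ ε := by rwa [dist_comm]
          linarith
        rw [hvt, Set.indicator_of_mem hymem]
        exact annulus_bound hr hB huc hymem hynorm hεη (by linarith) hε
      have hqx₀ : α * (r-2*δ)^2 ≤ α * ⟪x₀, x₀⟫ := by
        rw [real_inner_self_eq_norm_sq]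
        refine mul_le_mul_of_nonneg_left ?_ hα0
        have h1 : (0:ℝ) ≤ r - 2*δ := by linarith
        have h2 : r - 2*δ ≤ ‖x₀‖ := by linarith
        exact pow_le_pow_left₀ h1 h2 2
      rw [hhx₀] at hmain
      have : 2*κ ≤ c/2 := by linarith
      linarith
    · -- interior cases
      by_cases hpos : ∀ y ∈ closedBall x₀ ε, 0 < v y
      · -- good case : positive laplacian at a local max, contradiction
        exfalso
        have hsub : closedBall x₀ ρ.rOut ⊆ ball (0:E) r := by
          rw [hrout]
          intro z hz
          rw [mem_closedBall] at hz
          rw [mem_ball]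
          calc dist z 0 ≤ dist z x₀ + dist x₀ 0 := dist_triangle _ _ _
            _ ≤ ε + ‖x₀‖ := by rw [dist_zero_right]; linarith
            _ < r := by linarith
        have hlapvm : 1 ≤ lap vm x₀ :=
          one_le_lap_mol hpair ρ hsub (fun y hy => hpos y (by rwa [hrout] at hy)) hint
        have hlaph : lap h x₀ = lap vm x₀ - 2*d*α := by
          have h1 := lap_sub hvmsm (quad_contDiff α) x₀
          have h2 := lap_quad (d := d) α x₀
          rw [hh]
          rw [h1, h2]
        have hδpos : 0 < lap h x₀ := by
          have h2da : 2*(d:ℝ)*α = 1 - δ := by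
            rw [hα]; field_simp
          rw [hlaph, h2da]
          linarith
        have hloc : IsLocalMax h x₀ := by
          refine hx₀max.isLocalMax ?_
          refine Filter.mem_of_superset (isOpen_ball.mem_nhds ?_) ball_subset_closedBall
          rw [mem_ball, dist_zero_right]; linarith
        exact not_isLocalMax_of_lap_pos hhsm hδpos hloc
      · -- bad point case : contradiction
        exfalso
        push_neg at hpos
        obtain ⟨y, hy, hvy0⟩ := hpos
        rw [mem_closedBall] at hy
        have hymem : y ∈ closedBall (0:E) r := by
          rw [mem_closedBall]
          calc dist y 0 ≤ dist y x₀ + dist x₀ 0 := dist_triangle _ _ _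
            _ ≤ ε + ‖x₀‖ := by rw [dist_zero_right]; linarith
            _ ≤ r := by linarith
        have hvy : v y = 0 := le_antisymm hvy0 (hv0 y hymem)
        have hvmx₀ : vm x₀ ≤ κ := by
          refine mol_le hint ρ ?_
          intro z hz
          rw [hrout, mem_closedBall] at hz
          have hzmem : z ∈ closedBall (0:E) r := by
            rw [mem_closedBall]
            calc dist z 0 ≤ dist z x₀ + dist x₀ 0 := dist_triangle _ _ _
              _ ≤ ε + ‖x₀‖ := by rw [dist_zero_right]; linarith
              _ ≤ r := by linarith
          rw [hvt, Set.indicator_of_mem hzmem]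
          have hdzy : dist z y < η := by
            calc dist z y ≤ dist z x₀ + dist x₀ y := dist_triangle _ _ _
              _ ≤ ε + ε := by rw [dist_comm x₀ y]; linarith
              _ < η := by linarith
          have := huc z hzmem y hymem hdzy
          rw [Real.dist_eq, hvy, sub_zero] at this
          exact ((abs_lt.1 this).2).le
        have hq0 : 0 ≤ α * ⟪x₀, x₀⟫ := mul_nonneg hα0 real_inner_self_nonneg
        rw [hhx₀] at hmain
        linarith
  -- limit argument
  have hFcont : Continuous (fun δ : ℝ => r^2/(2*d) + δ - ((1-δ)/(2*d)) * (r-2*δ)^2) := by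
    apply Continuous.sub
    · exact continuous_const.add continuous_id
    · exact ((continuous_const.sub continuous_id).div_const _).mul
        ((continuous_const.sub (continuous_const.mul continuous_id)).pow 2)
  have hF0 : r^2/(2*(d:ℝ)) + 0 - ((1-0)/(2*(d:ℝ))) * (r-2*0)^2 = 0 := by
    field_simp
    ring
  have htend : Filter.Tendsto (fun δ : ℝ => r^2/(2*d) + δ - ((1-δ)/(2*d)) * (r-2*δ)^2)
      (𝓝[>] (0:ℝ)) (𝓝 0) := by
    have := hFcont.tendsto 0
    rw [hF0] at this
    exact this.mono_left nhdsWithin_le_nhds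
  have hev : ∀ᶠ δ in 𝓝[>] (0:ℝ),
      v 0 / 2 ≤ r^2/(2*d) + δ - ((1-δ)/(2*d)) * (r-2*δ)^2 := by
    filter_upwards [Ioo_mem_nhdsGT_of_mem
      (⟨le_refl (0:ℝ), lt_min one_pos (by linarith : (0:ℝ) < r/8)⟩ :
        (0:ℝ) ∈ Set.Ico (0:ℝ) (min 1 (r/8)))] with δ hδ
    exact key δ hδ.1 (lt_of_lt_of_le hδ.2 (min_le_left _ _))
      (lt_of_lt_of_le hδ.2 (min_le_right _ _))
  have hfinal : v 0 / 2 ≤ 0 := ge_of_tendsto htend hev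
  linarith

end Core
section Core2
variable {d : ℕ}
local notation "E" => EuclideanSpace ℝ (Fin d)

set_option maxHeartbeats 2000000 in
lemma core2 (hd : 0 < d) {r : ℝ} (hr : 0 < r) {u w : E → ℝ}
    (hcu : ContinuousOn u (closedBall 0 r)) (hcw : ContinuousOn w (closedBall 0 r))
    (hu0 : ∀ x ∈ closedBall (0:E) r, 0 ≤ u x)
    (hw0 : ∀ x ∈ closedBall (0:E) r, 0 ≤ w x)
    (huw : ∀ x ∈ closedBall (0:E) r, w x / 2 ≤ u x)
    (hwu : ∀ x ∈ closedBall (0:E) r, u x / 2 ≤ w x)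
    (hBu : ∀ x ∈ sphere (0:E) r, u x ≤ r^2/(4*d))
    (hpu : ∀ φ : E → ℝ, ContDiff ℝ (⊤:ℕ∞) φ → HasCompactSupport φ → tsupport φ ⊆ ball 0 r →
      (∀ y ∈ tsupport φ, w y / 2 < u y) → (∀ x, 0 ≤ φ x) → ∫ x, φ x ≤ ∫ x, u x * lap φ x)
    (hpw : ∀ φ : E → ℝ, ContDiff ℝ (⊤:ℕ∞) φ → HasCompactSupport φ → tsupport φ ⊆ ball 0 r →
      (∀ y ∈ tsupport φ, u y / 2 < w y) → (∀ x, 0 ≤ φ x) → ∫ x, φ x ≤ ∫ x, w x * lap φ x) :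
    u 0 = 0 := by
  by_contra hne
  have h0mem : (0:E) ∈ closedBall (0:E) r := by
    rw [mem_closedBall, dist_self]; exact hr.le
  have hc : 0 < u 0 := lt_of_le_of_ne (hu0 0 h0mem) (Ne.symm hne)
  have hdR : (0:ℝ) < d := by exact_mod_cast hd
  have hBw : ∀ x ∈ sphere (0:E) r, w x ≤ r^2/(2*d) := by
    intro x hx
    have h1 := hBu x hx
    have h2 := huw x (sphere_subset_closedBall hx)
    have h3 : r^2/(2*(d:ℝ)) = 2*(r^2/(4*(d:ℝ))) := by
      field_simp; ring
    linarith
  have hBu' : ∀ x ∈ sphere (0:E) r, u x ≤ r^2/(2*d) := by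
    intro x hx
    have h1 := hBu x hx
    have h2 : r^2/(4*(d:ℝ)) ≤ r^2/(2*(d:ℝ)) := by
      apply div_le_div_of_nonneg_left (by positivity) (by linarith) (by linarith)
    linarith
  have key : ∀ δ : ℝ, 0 < δ → δ < 1 → δ < r/8 →
      u 0 / 2 ≤ r^2/(2*d) + δ - ((1-δ)/(2*d)) * (r-2*δ)^2 := by
    intro δ hδ hδ1 hδr
    set c := u 0 with hcdef
    set κ := min δ (c/8) with hκdef
    have hκ : 0 < κ := lt_min hδ (by linarith)
    have hκδ : κ ≤ δ := min_le_left _ _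
    have hκc : κ ≤ c/8 := min_le_right _ _
    obtain ⟨ηu, hηu, hucu⟩ := unif_cont hcu hκ
    obtain ⟨ηw, hηw, hucw⟩ := unif_cont hcw hκ
    set η := min ηu ηw with hηdef
    have hη : 0 < η := lt_min hηu hηw
    have hucu' : ∀ x ∈ closedBall (0:E) r, ∀ y ∈ closedBall (0:E) r,
        dist x y < η → dist (u x) (u y) < κ := fun x hx y hy hd' =>
      hucu x hx y hy (lt_of_lt_of_le hd' (min_le_left _ _))
    have hucw' : ∀ x ∈ closedBall (0:E) r, ∀ y ∈ closedBall (0:E) r,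
        dist x y < η → dist (w x) (w y) < κ := fun x hx y hy hd' =>
      hucw x hx y hy (lt_of_lt_of_le hd' (min_le_right _ _))
    set ε := min (η/4) (min δ (r/8)) with hεdef
    have hε : 0 < ε := lt_min (by linarith) (lt_min hδ (by linarith))
    have hεη : 3*ε < η := by
      have : ε ≤ η/4 := min_le_left _ _
      linarith
    have hεδ : ε ≤ δ := (min_le_right _ _).trans (min_le_left _ _)
    have hεr : ε ≤ r/8 := (min_le_right _ _).trans (min_le_right _ _)
    set ρ : ContDiffBump (0:E) := ⟨ε/2, ε, by linarith, by linarith⟩ with hρdef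
    have hrout : ρ.rOut = ε := rfl
    set ut := Set.indicator (closedBall (0:E) r) u with hut
    set wt := Set.indicator (closedBall (0:E) r) w with hwt
    have hintu : Integrable ut :=
      (hcu.integrableOn_compact (isCompact_closedBall _ _)).integrable_indicator
        measurableSet_closedBall
    have hintw : Integrable wt :=
      (hcw.integrableOn_compact (isCompact_closedBall _ _)).integrable_indicator
        measurableSet_closedBall
    set um := ut ⋆[ContinuousLinearMap.lsmul ℝ ℝ, volume] ρ.normed volume with hum
    set wm := wt ⋆[ContinuousLinearMap.lsmul ℝ ℝ, volume] ρ.normed volume with hwm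
    have humsm : ContDiff ℝ (⊤:ℕ∞) um :=
      (ρ.hasCompactSupport_normed (μ := volume)).contDiff_convolution_right _
        hintu.locallyIntegrable ρ.contDiff_normed
    have hwmsm : ContDiff ℝ (⊤:ℕ∞) wm :=
      (ρ.hasCompactSupport_normed (μ := volume)).contDiff_convolution_right _
        hintw.locallyIntegrable ρ.contDiff_normed
    set α := (1-δ)/(2*(d:ℝ)) with hα
    have hα0 : 0 ≤ α := div_nonneg (by linarith) (by positivity)
    set h : EuclideanSpace ℝ (Fin d) → ℝ := fun z => max (um z) (wm z) - α * ⟪z,z⟫ with hh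
    have hhcont : Continuous h :=
      ((humsm.continuous.max hwmsm.continuous).sub ((quad_contDiff α).continuous))
    have hKne : (0:E) ∈ closedBall (0:E) (r-ε) := by
      rw [mem_closedBall, dist_self]; linarith
    obtain ⟨x₀, hx₀K, hx₀max⟩ := (isCompact_closedBall (0:E) (r-ε)).exists_isMaxOn
      ⟨0, hKne⟩ hhcont.continuousOn
    have hx₀r : ‖x₀‖ ≤ r - ε := by rwa [mem_closedBall, dist_zero_right] at hx₀K
    -- lower bound at 0
    have hum0 : c - κ ≤ um 0 := by
      refine mol_ge hintu ρ ?_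
      intro y hy
      rw [hrout] at hy
      have hymem : y ∈ closedBall (0:E) r :=
        closedBall_subset_closedBall (by linarith) hy
      rw [hut, Set.indicator_of_mem hymem]
      rw [mem_closedBall] at hy
      have hd1 : dist y 0 < η := lt_of_le_of_lt hy (by linarith)
      have := hucu' y hymem 0 h0mem hd1
      rw [Real.dist_eq] at this
      have h2 := (abs_lt.1 this).1
      linarith
    have hh0 : c - κ ≤ h 0 := by
      show c - κ ≤ max (um 0) (wm 0) - α * ⟪(0:EuclideanSpace ℝ (Fin d)), 0⟫
      rw [inner_zero_left]
      simp only [mul_zero, sub_zero]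
      exact le_trans hum0 (le_max_left _ _)
    have hmain : c - κ ≤ h x₀ := le_trans hh0 (hx₀max hKne)
    have hhx₀ : h x₀ = max (um x₀) (wm x₀) - α * ⟪x₀, x₀⟫ := rfl
    have hqpos : 0 ≤ α * ⟪x₀, x₀⟫ := mul_nonneg hα0 real_inner_self_nonneg
    rcases le_or_gt (r - 2*ε) ‖x₀‖ with hcaseA | hcaseB
    · -- Case A : annulus
      have hmem_ann : ∀ y ∈ closedBall x₀ ρ.rOut,
          y ∈ closedBall (0:E) r ∧ r - 3*ε ≤ ‖y‖ := by
        intro y hy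
        rw [hrout, mem_closedBall] at hy
        constructor
        · rw [mem_closedBall]
          calc dist y 0 ≤ dist y x₀ + dist x₀ 0 := dist_triangle _ _ _
            _ ≤ ε + ‖x₀‖ := by rw [dist_zero_right]; linarith
            _ ≤ r := by linarith
        · have h1 : dist x₀ 0 ≤ dist x₀ y + dist y 0 := dist_triangle _ _ _
          rw [dist_zero_right, dist_zero_right] at h1
          have h2 : dist x₀ y ≤ ε := by rwa [dist_comm]
          linarith
      have humx₀ : um x₀ ≤ r^2/(2*d) + κ := by
        refine mol_le hintu ρ ?_
        intro y hy
        obtain ⟨hymem, hynorm⟩ := hmem_ann y hy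
        rw [hut, Set.indicator_of_mem hymem]
        exact annulus_bound hr hBu' hucu' hymem hynorm hεη (by linarith) hε
      have hwmx₀ : wm x₀ ≤ r^2/(2*d) + κ := by
        refine mol_le hintw ρ ?_
        intro y hy
        obtain ⟨hymem, hynorm⟩ := hmem_ann y hy
        rw [hwt, Set.indicator_of_mem hymem]
        exact annulus_bound hr hBw hucw' hymem hynorm hεη (by linarith) hε
      have hqx₀ : α * (r-2*δ)^2 ≤ α * ⟪x₀, x₀⟫ := by
        rw [real_inner_self_eq_norm_sq]
        refine mul_le_mul_of_nonneg_left ?_ hα0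
        have h1 : (0:ℝ) ≤ r - 2*δ := by linarith
        have h2 : r - 2*δ ≤ ‖x₀‖ := by linarith
        exact pow_le_pow_left₀ h1 h2 2
      rw [hhx₀] at hmain
      have hmaxb : max (um x₀) (wm x₀) ≤ r^2/(2*d) + κ := max_le humx₀ hwmx₀
      linarith
    · -- interior cases
      have hsubball : closedBall x₀ ρ.rOut ⊆ ball (0:E) r := by
        rw [hrout]
        intro z hz
        rw [mem_closedBall] at hz
        rw [mem_ball]
        calc dist z 0 ≤ dist z x₀ + dist x₀ 0 := dist_triangle _ _ _
          _ ≤ ε + ‖x₀‖ := by rw [dist_zero_right]; linarith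
          _ < r := by linarith
      have hsubcb : closedBall x₀ ε ⊆ closedBall (0:E) r := by
        rw [← hrout]
        exact hsubball.trans ball_subset_closedBall
      have h2da : 2*(d:ℝ)*α = 1 - δ := by
        rw [hα]; field_simp
      have hloc : ∀ g : EuclideanSpace ℝ (Fin d) → ℝ,
          (∀ z ∈ closedBall (0:E) (r-ε), g z ≤ h z) → g x₀ = h x₀ →
          IsLocalMax g x₀ := by
        intro g hg hgx₀
        have : IsMaxOn g (closedBall (0:E) (r-ε)) x₀ := by
          intro z hz
          calc g z ≤ h z := hg z hz
            _ ≤ h x₀ := hx₀max hz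
            _ = g x₀ := hgx₀.symm
        refine this.isLocalMax ?_
        refine Filter.mem_of_superset (isOpen_ball.mem_nhds ?_) ball_subset_closedBall
        rw [mem_ball, dist_zero_right]; linarith
      rcases le_or_gt (wm x₀) (um x₀) with hbr | hbr
      · -- u-branch
        by_cases hposu : ∀ y ∈ closedBall x₀ ε, w y / 2 < u y
        · exfalso
          set g : EuclideanSpace ℝ (Fin d) → ℝ := fun z => um z - α * ⟪z,z⟫ with hg
          have hgsm : ContDiff ℝ (⊤:ℕ∞) g := humsm.sub (quad_contDiff α)
          have hlapum : 1 ≤ lap um x₀ :=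
            one_le_lap_mol hpu ρ hsubball (fun y hy => hposu y (by rwa [hrout] at hy)) hintu
          have hlapg : lap g x₀ = lap um x₀ - 2*d*α := by
            have h1 := lap_sub humsm (quad_contDiff α) x₀
            have h2 := lap_quad (d := d) α x₀
            rw [hg, h1, h2]
          have hgpos : 0 < lap g x₀ := by
            rw [hlapg, h2da]; linarith
          have hglm : IsLocalMax g x₀ := by
            refine hloc g (fun z _ => ?_) ?_
            · show um z - α * ⟪z,z⟫ ≤ max (um z) (wm z) - α * ⟪z,z⟫
              have := le_max_left (um z) (wm z)
              linarith
            · show um x₀ - α * ⟪x₀,x₀⟫ = max (um x₀) (wm x₀) - α * ⟪x₀,x₀⟫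
              rw [max_eq_left hbr]
          exact not_isLocalMax_of_lap_pos hgsm hgpos hglm
        · exfalso
          push_neg at hposu
          obtain ⟨y, hy, hbad⟩ := hposu
          have hymem : y ∈ closedBall (0:E) r := hsubcb hy
          have heq : u y = w y / 2 := le_antisymm hbad (huw y hymem)
          rw [mem_closedBall] at hy
          have hdum : um x₀ ≤ u y + κ := by
            refine mol_le hintu ρ ?_
            intro z hz
            rw [hrout] at hz
            have hzmem : z ∈ closedBall (0:E) r := hsubcb hz
            rw [mem_closedBall] at hz
            rw [hut, Set.indicator_of_mem hzmem]
            have hdzy : dist z y < η := by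
              calc dist z y ≤ dist z x₀ + dist x₀ y := dist_triangle _ _ _
                _ ≤ ε + ε := by rw [dist_comm x₀ y]; linarith
                _ < η := by linarith
            have := hucu' z hzmem y hymem hdzy
            rw [Real.dist_eq] at this
            have h2 := (abs_lt.1 this).2
            linarith
          have hdwm : w y - κ ≤ wm x₀ := by
            refine mol_ge hintw ρ ?_
            intro z hz
            rw [hrout] at hz
            have hzmem : z ∈ closedBall (0:E) r := hsubcb hz
            rw [mem_closedBall] at hz
            rw [hwt, Set.indicator_of_mem hzmem]
            have hdzy : dist z y < η := by
              calc dist z y ≤ dist z x₀ + dist x₀ y := dist_triangle _ _ _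
                _ ≤ ε + ε := by rw [dist_comm x₀ y]; linarith
                _ < η := by linarith
            have := hucw' z hzmem y hymem hdzy
            rw [Real.dist_eq] at this
            have h2 := (abs_lt.1 this).1
            linarith
          -- w y = 2 u y
          have hw2u : w y = 2 * u y := by linarith
          have huy : u y ≤ 2*κ := by
            have : w y - κ ≤ um x₀ := le_trans hdwm hbr
            rw [hw2u] at this
            linarith
          rw [hhx₀, max_eq_left hbr] at hmain
          linarith
      · -- w-branch
        by_cases hposw : ∀ y ∈ closedBall x₀ ε, u y / 2 < w y
        · exfalso
          set g : EuclideanSpace ℝ (Fin d) → ℝ := fun z => wm z - α * ⟪z,z⟫ with hg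
          have hgsm : ContDiff ℝ (⊤:ℕ∞) g := hwmsm.sub (quad_contDiff α)
          have hlapwm : 1 ≤ lap wm x₀ :=
            one_le_lap_mol hpw ρ hsubball (fun y hy => hposw y (by rwa [hrout] at hy)) hintw
          have hlapg : lap g x₀ = lap wm x₀ - 2*d*α := by
            have h1 := lap_sub hwmsm (quad_contDiff α) x₀
            have h2 := lap_quad (d := d) α x₀
            rw [hg, h1, h2]
          have hgpos : 0 < lap g x₀ := by
            rw [hlapg, h2da]; linarith
          have hglm : IsLocalMax g x₀ := by
            refine hloc g (fun z _ => ?_) ?_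
            · show wm z - α * ⟪z,z⟫ ≤ max (um z) (wm z) - α * ⟪z,z⟫
              have := le_max_right (um z) (wm z)
              linarith
            · show wm x₀ - α * ⟪x₀,x₀⟫ = max (um x₀) (wm x₀) - α * ⟪x₀,x₀⟫
              rw [max_eq_right hbr.le]
          exact not_isLocalMax_of_lap_pos hgsm hgpos hglm
        · exfalso
          push_neg at hposw
          obtain ⟨y, hy, hbad⟩ := hposw
          have hymem : y ∈ closedBall (0:E) r := hsubcb hy
          have heq : w y = u y / 2 := le_antisymm hbad (hwu y hymem)
          rw [mem_closedBall] at hy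
          have hdwm : wm x₀ ≤ w y + κ := by
            refine mol_le hintw ρ ?_
            intro z hz
            rw [hrout] at hz
            have hzmem : z ∈ closedBall (0:E) r := hsubcb hz
            rw [mem_closedBall] at hz
            rw [hwt, Set.indicator_of_mem hzmem]
            have hdzy : dist z y < η := by
              calc dist z y ≤ dist z x₀ + dist x₀ y := dist_triangle _ _ _
                _ ≤ ε + ε := by rw [dist_comm x₀ y]; linarith
                _ < η := by linarith
            have := hucw' z hzmem y hymem hdzy
            rw [Real.dist_eq] at this
            have h2 := (abs_lt.1 this).2
            linarith
          have hdum : u y - κ ≤ um x₀ := by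
            refine mol_ge hintu ρ ?_
            intro z hz
            rw [hrout] at hz
            have hzmem : z ∈ closedBall (0:E) r := hsubcb hz
            rw [mem_closedBall] at hz
            rw [hut, Set.indicator_of_mem hzmem]
            have hdzy : dist z y < η := by
              calc dist z y ≤ dist z x₀ + dist x₀ y := dist_triangle _ _ _
                _ ≤ ε + ε := by rw [dist_comm x₀ y]; linarith
                _ < η := by linarith
            have := hucu' z hzmem y hymem hdzy
            rw [Real.dist_eq] at this
            have h2 := (abs_lt.1 this).1
            linarith
          have hu2w : u y = 2 * w y := by linarith
          have hwy : w y ≤ 2*κ := by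
            have : u y - κ ≤ wm x₀ := le_trans hdum hbr.le
            rw [hu2w] at this
            linarith
          rw [hhx₀, max_eq_right hbr.le] at hmain
          linarith
  -- limit argument
  have hFcont : Continuous (fun δ : ℝ => r^2/(2*d) + δ - ((1-δ)/(2*d)) * (r-2*δ)^2) := by
    apply Continuous.sub
    · exact continuous_const.add continuous_id
    · exact ((continuous_const.sub continuous_id).div_const _).mul
        ((continuous_const.sub (continuous_const.mul continuous_id)).pow 2)
  have hF0 : r^2/(2*(d:ℝ)) + 0 - ((1-0)/(2*(d:ℝ))) * (r-2*0)^2 = 0 := by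
    field_simp
    ring
  have htend : Filter.Tendsto (fun δ : ℝ => r^2/(2*d) + δ - ((1-δ)/(2*d)) * (r-2*δ)^2)
      (𝓝[>] (0:ℝ)) (𝓝 0) := by
    have := hFcont.tendsto 0
    rw [hF0] at this
    exact this.mono_left nhdsWithin_le_nhds
  have hev : ∀ᶠ δ in 𝓝[>] (0:ℝ),
      u 0 / 2 ≤ r^2/(2*d) + δ - ((1-δ)/(2*d)) * (r-2*δ)^2 := by
    filter_upwards [Ioo_mem_nhdsGT_of_mem
      (⟨le_refl (0:ℝ), lt_min one_pos (by linarith : (0:ℝ) < r/8)⟩ :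
        (0:ℝ) ∈ Set.Ico (0:ℝ) (min 1 (r/8)))] with δ hδ
    exact key δ hδ.1 (lt_of_lt_of_le hδ.2 (min_le_left _ _))
      (lt_of_lt_of_le hδ.2 (min_le_right _ _))
  have hfinal : u 0 / 2 ≤ 0 := ge_of_tendsto htend hev
  linarith

end Core2
/-- Non-degeneracy for the system of obstacle problems: if `u - ½w` (resp. `u`) is at
most `r²/(4d)` on `∂B_r`, then `u(0) = ½w(0)` (resp. `u(0) = 0`). -/
theorem stmt4 (d : ℕ) (hd : 0 < d) (r : ℝ) (hr : 0 < r)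
    (u w : EuclideanSpace ℝ (Fin d) → ℝ)
    (hcu : ContinuousOn u (closedBall 0 r)) (hcw : ContinuousOn w (closedBall 0 r))
    (hsol : SolPair u w (ball 0 r)) :
    ((∀ x ∈ sphere (0 : EuclideanSpace ℝ (Fin d)) r, u x - w x / 2 ≤ r^2 / (4 * d)) →
        u 0 = w 0 / 2) ∧
    ((∀ x ∈ sphere (0 : EuclideanSpace ℝ (Fin d)) r, u x ≤ r^2 / (4 * d)) →
        u 0 = 0) := by
  obtain ⟨⟨hconstr, hsubu, hsubw⟩, ⟨-, hsupu, hsupw⟩⟩ := hsol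
  have hdR : (0:ℝ) < d := by exact_mod_cast hd
  have hu0cb : ∀ x ∈ closedBall (0:EuclideanSpace ℝ (Fin d)) r, 0 ≤ u x :=
    nonneg_closure hr hcu (fun x hx => (hconstr x hx).1)
  have hw0cb : ∀ x ∈ closedBall (0:EuclideanSpace ℝ (Fin d)) r, 0 ≤ w x :=
    nonneg_closure hr hcw (fun x hx => (hconstr x hx).2.1)
  have huwcb : ∀ x ∈ closedBall (0:EuclideanSpace ℝ (Fin d)) r, w x / 2 ≤ u x :=
    le_closure hr (hcw.div_const 2) hcu (fun x hx => (hconstr x hx).2.2.1)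
  have hwucb : ∀ x ∈ closedBall (0:EuclideanSpace ℝ (Fin d)) r, u x / 2 ≤ w x :=
    le_closure hr (hcu.div_const 2) hcw (fun x hx => (hconstr x hx).2.2.2)
  have hfrac : r^2/(2*(d:ℝ)) = 2*(r^2/(4*(d:ℝ))) := by field_simp; ring
  -- the subsolution/supersolution pairing facts
  have hGEu : ∀ φ : EuclideanSpace ℝ (Fin d) → ℝ, ContDiff ℝ (⊤:ℕ∞) φ →
      HasCompactSupport φ → tsupport φ ⊆ ball 0 r →
      (∀ y ∈ tsupport φ, w y / 2 < u y) → (∀ x, 0 ≤ φ x) →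
      ∫ x, φ x ≤ ∫ x, u x * lap φ x := by
    intro φ h1 h2 h3 h4 h5
    have hGE := hsubu φ h1 h2 h3 h5
    have hif : (fun x => (if w x / 2 < u x then (1:ℝ) else 0) * φ x) = φ := by
      funext x2
      by_cases hx2 : x2 ∈ tsupport φ
      · rw [if_pos (h4 x2 hx2), one_mul]
      · rw [image_eq_zero_of_notMem_tsupport hx2, mul_zero]
    rwa [hif] at hGE
  have hGEw : ∀ φ : EuclideanSpace ℝ (Fin d) → ℝ, ContDiff ℝ (⊤:ℕ∞) φ →
      HasCompactSupport φ → tsupport φ ⊆ ball 0 r →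
      (∀ y ∈ tsupport φ, u y / 2 < w y) → (∀ x, 0 ≤ φ x) →
      ∫ x, φ x ≤ ∫ x, w x * lap φ x := by
    intro φ h1 h2 h3 h4 h5
    have hGE := hsubw φ h1 h2 h3 h5
    have hif : (fun x => (if u x / 2 < w x then (1:ℝ) else 0) * φ x) = φ := by
      funext x2
      by_cases hx2 : x2 ∈ tsupport φ
      · rw [if_pos (h4 x2 hx2), one_mul]
      · rw [image_eq_zero_of_notMem_tsupport hx2, mul_zero]
    rwa [hif] at hGE
  have hLEw : ∀ φ : EuclideanSpace ℝ (Fin d) → ℝ, ContDiff ℝ (⊤:ℕ∞) φ →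
      HasCompactSupport φ → tsupport φ ⊆ ball 0 r → (∀ x, 0 ≤ φ x) →
      ∫ x, w x * lap φ x ≤ ∫ x, φ x := by
    intro φ h1 h2 h3 h5
    have hLE := hsupw φ h1 h2 h3 h5
    simpa using hLE
  constructor
  · -- part 1
    intro hb
    have hcv : ContinuousOn (fun x => 2*u x - w x)
        (closedBall (0:EuclideanSpace ℝ (Fin d)) r) :=
      (continuousOn_const.mul hcu).sub hcw
    have hv0 : ∀ x ∈ closedBall (0:EuclideanSpace ℝ (Fin d)) r, 0 ≤ 2*u x - w x := by
      intro x hx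
      have := huwcb x hx
      linarith
    have hB : ∀ x ∈ sphere (0:EuclideanSpace ℝ (Fin d)) r, 2*u x - w x ≤ r^2/(2*d) := by
      intro x hx
      have := hb x hx
      rw [hfrac]
      linarith
    have hpair : ∀ φ : EuclideanSpace ℝ (Fin d) → ℝ, ContDiff ℝ (⊤:ℕ∞) φ →
        HasCompactSupport φ → tsupport φ ⊆ ball 0 r →
        (∀ y ∈ tsupport φ, 0 < 2*u y - w y) → (∀ x, 0 ≤ φ x) →
        ∫ x, φ x ≤ ∫ x, (2*u x - w x) * lap φ x := by
      intro φ h1 h2 h3 h4 h5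
      have hIu : Integrable (fun y => u y * lap φ y) := integrable_mul_lap hcu h1 h2 h3
      have hIw : Integrable (fun y => w y * lap φ y) := integrable_mul_lap hcw h1 h2 h3
      have hGE := hGEu φ h1 h2 h3 (fun y hy => by have := h4 y hy; linarith) h5
      have hLE := hLEw φ h1 h2 h3 h5
      have hsplit : ∫ x, (2*u x - w x) * lap φ x
          = 2*(∫ x, u x * lap φ x) - ∫ x, w x * lap φ x := by
        rw [show (fun x => (2*u x - w x) * lap φ x)
            = fun x => 2*(u x * lap φ x) - w x * lap φ x from funext fun x => by ring]
        rw [integral_sub (hIu.const_mul 2) hIw, integral_const_mul]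
      rw [hsplit]
      linarith
    have hres := core hd hr hcv hv0 hB hpair
    linarith
  · -- part 2
    intro hb
    exact core2 hd hr hcu hcw hu0cb hw0cb huwcb hwucb hb hGEu hGEw
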